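/- Let H^{Λ,Dir} and H^Λ be the Dirichlet and Neumann-type restrictions of the quantum graph Schrödinger operator H to a topological subgraph Λ, and H^{Λ',Dir}, H^{Λ'} those on the closure Λ' of the complement. Then in the sense of quadratic forms, H^{Λ,Dir} ⊕ H^{Λ',Dir} ≥ H ≥ H^Λ ⊕ H^{Λ'}, i.e. the form domains are nested (Dirichlet decoupled ⊂ full ⊂ Neumann decoupled) and the quadratic forms satisfy the corresponding inequalities on the smaller domains. -/

import Mathlib

open Finset

/-- Dirichlet–Neumann bracketing for quantum graph forms.  The quadratic form
of the Schrödinger operator `H` on the metric graph is `h(f) = base(f) + ∑_v ⟨R_v f(v), f(v)⟩`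
(with `base(f) = ‖Df‖² + ⟨qf,f⟩`), on the domain of `f` with boundary values `f(v) ∈ 𝒢_v`.
Decoupling along the boundary `B = ∂Λ = ∂Λ'`:
* the Dirichlet form `h^{Λ,Dir} ⊕ h^{Λ',Dir}` additionally imposes `f(v) = 0` for `v ∈ B`,
* the Neumann-type form `h^Λ ⊕ h^{Λ'}` imposes no condition at `B` and replaces the vertex
  term there by `-C_R ∑_{v∈B} ‖f(v)‖²`.
Then the form domains are nested (Dirichlet decoupled ⊂ full ⊂ Neumann decoupled), on the
Dirichlet domain the decoupled Dirichlet form equals (hence dominates) `h`, and on the full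
domain `h` dominates the decoupled Neumann form; i.e.
`H^{Λ,Dir} ⊕ H^{Λ',Dir} ≥ H ≥ H^Λ ⊕ H^{Λ'}` in the sense of quadratic forms. -/
theorem quantum_graph_bracketing
    (F : Type*) [AddCommGroup F] [Module ℂ F]        -- functions on the metric graph
    (V : Type*) [Fintype V] [DecidableEq V] (B : Finset V)           -- vertices; boundary ∂Λ
    (d : V → ℕ)                                      -- vertex degrees
    (trace : F →ₗ[ℂ] ∀ v, EuclideanSpace ℂ (Fin (d v)))  -- boundary values f ↦ (f(v))_v
    (G : ∀ v, Submodule ℂ (EuclideanSpace ℂ (Fin (d v))))  -- vertex spaces 𝒢_v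
    (R : ∀ v, EuclideanSpace ℂ (Fin (d v)) →ₗ[ℂ] EuclideanSpace ℂ (Fin (d v)))
    (CR : ℝ) (hCR : ∀ v x, ‖R v x‖ ≤ CR * ‖x‖)
    (base : F → ℝ) :
    -- domain nesting: Dirichlet decoupled ⊆ full ⊆ Neumann decoupled
    ({f : F | (∀ v, trace f v ∈ G v) ∧ ∀ v ∈ B, trace f v = 0} ⊆
        {f : F | ∀ v, trace f v ∈ G v}) ∧
    ({f : F | ∀ v, trace f v ∈ G v} ⊆ {f : F | ∀ v ∉ B, trace f v ∈ G v}) ∧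
    -- on the Dirichlet domain, the decoupled Dirichlet form dominates (equals) h
    (∀ f : F, (∀ v, trace f v ∈ G v) → (∀ v ∈ B, trace f v = 0) →
      base f + ∑ v : V, (inner ℂ (R v (trace f v)) (trace f v) : ℂ).re ≤
        base f + ∑ v ∈ Finset.univ \ B, (inner ℂ (R v (trace f v)) (trace f v) : ℂ).re) ∧
    -- on the full domain, h dominates the decoupled Neumann-type form
    (∀ f : F, (∀ v, trace f v ∈ G v) →
      base f + ∑ v ∈ Finset.univ \ B, (inner ℂ (R v (trace f v)) (trace f v) : ℂ).re
          - CR * ∑ v ∈ B, ‖trace f v‖ ^ 2 ≤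
        base f + ∑ v : V, (inner ℂ (R v (trace f v)) (trace f v) : ℂ).re) := by
  refine ⟨fun f hf => hf.1, fun f hf v _ => hf v, ?_, ?_⟩
  · intro f _ h0
    have : ∑ v : V, (inner ℂ (R v (trace f v)) (trace f v) : ℂ).re =
        ∑ v ∈ Finset.univ \ B, (inner ℂ (R v (trace f v)) (trace f v) : ℂ).re := by
      rw [← Finset.sum_subset (Finset.sdiff_subset : Finset.univ \ B ⊆ Finset.univ)]
      intro v _ hv
      simp only [Finset.mem_sdiff, Finset.mem_univ, true_and, not_not] at hv
      rw [h0 v hv]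
      simp
    linarith
  · intro f _
    have key : ∀ v ∈ B, -(CR * ‖trace f v‖ ^ 2) ≤
        (inner ℂ (R v (trace f v)) (trace f v) : ℂ).re := by
      intro v _
      have h1 : |(inner ℂ (R v (trace f v)) (trace f v) : ℂ).re| ≤
          ‖(inner ℂ (R v (trace f v)) (trace f v) : ℂ)‖ := Complex.abs_re_le_norm _
      have h2 : ‖(inner ℂ (R v (trace f v)) (trace f v) : ℂ)‖ ≤
          ‖R v (trace f v)‖ * ‖trace f v‖ := norm_inner_le_norm _ _
      have h3 := hCR v (trace f v)
      have h4 : ‖R v (trace f v)‖ * ‖trace f v‖ ≤ CR * ‖trace f v‖ * ‖trace f v‖ :=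
        mul_le_mul_of_nonneg_right h3 (norm_nonneg _)
      have := neg_abs_le (inner ℂ (R v (trace f v)) (trace f v) : ℂ).re
      nlinarith
    have hsum : ∑ v ∈ B, -(CR * ‖trace f v‖ ^ 2) ≤
        ∑ v ∈ B, (inner ℂ (R v (trace f v)) (trace f v) : ℂ).re :=
      Finset.sum_le_sum key
    have hsplit : ∑ v : V, (inner ℂ (R v (trace f v)) (trace f v) : ℂ).re =
        ∑ v ∈ Finset.univ \ B, (inner ℂ (R v (trace f v)) (trace f v) : ℂ).re +
        ∑ v ∈ B, (inner ℂ (R v (trace f v)) (trace f v) : ℂ).re := by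
      rw [Finset.sum_sdiff_eq_sub (Finset.subset_univ B)]
      ring
    rw [Finset.sum_neg_distrib, ← Finset.mul_sum] at hsum
    linarith
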